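/- Let ℋ be a complex Hilbert space, let J₀, J₁ be bounded skew-adjoint unitaries on ℋ with J₁ − J₀ invertible, and define F := ½·J₀(J₁J₀−1)(J₁J₀+1)⁻¹·s, where s is the positive square root of 2 + J₁J₀ + J₀J₁. If a is a bounded operator on ℋ such that aJ₀ − J₀a and aJ₁ − J₁a are compact, then aF − Fa is compact. -/

import Mathlib

set_option synthInstance.maxHeartbeats 1000000
set_option maxHeartbeats 1000000

open Polynomial in
lemma cfc_mem_closure_polyRange {H : Type*} [NormedAddCommGroup H]
    [InnerProductSpace ℂ H] [CompleteSpace H] (T : H →L[ℂ] H) (hT : IsSelfAdjoint T)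
    (g : ℝ → ℝ) :
    cfc g T ∈ closure (Set.range fun p : ℝ[X] => aeval (R := ℝ) T p) := by
  by_cases hg : ContinuousOn g (spectrum ℝ T)
  · rw [cfc_apply g T hT hg]
    have hdense := polynomialFunctions.topologicalClosure (spectrum ℝ T)
    have hmem : (⟨_, hg.restrict⟩ : C(spectrum ℝ T, ℝ)) ∈
        closure (polynomialFunctions (spectrum ℝ T) : Set C(spectrum ℝ T, ℝ)) := by
      have : (⟨_, hg.restrict⟩ : C(spectrum ℝ T, ℝ)) ∈
          (polynomialFunctions (spectrum ℝ T)).topologicalClosure := by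
        rw [hdense]; exact Algebra.mem_top
      exact this
    refine map_mem_closure (cfcHom_continuous hT) hmem ?_
    rintro q ⟨p, -, rfl⟩
    refine ⟨p, ?_⟩
    show aeval T p = _
    have hc : ContinuousOn (fun x : ℝ => p.eval x) (spectrum ℝ T) :=
      p.continuous.continuousOn
    have h1 : cfc (fun x : ℝ => p.eval x) T = cfcHom hT ⟨_, hc.restrict⟩ :=
      cfc_apply _ T hT hc
    have h2 : cfc (fun x : ℝ => p.eval x) T = aeval T p := cfc_polynomial p T hT
    rw [← h2, h1]
    congr 1
  · rw [cfc_apply_of_not_continuousOn T hg]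
    exact subset_closure ⟨0, by simp⟩

/-- For bounded skew-adjoint unitaries `J₀, J₁` on a complex Hilbert space
with `J₁ − J₀` invertible, let `F = ½ J₀(J₁J₀−1)(J₁J₀+1)⁻¹ s` with `s` the positive
square root of `2 + J₁J₀ + J₀J₁`. If `a` has compact commutators with `J₀` and `J₁`,
then `[a, F]` is compact. -/
theorem bounded_transform_compact_commutator {H : Type*} [NormedAddCommGroup H]
    [InnerProductSpace ℂ H] [CompleteSpace H] (J₀ J₁ : H →L[ℂ] H)
    (hJ₀sa : star J₀ = -J₀) (hJ₀sq : J₀ ^ 2 = -1)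
    (hJ₁sa : star J₁ = -J₁) (hJ₁sq : J₁ ^ 2 = -1)
    (hinv : IsUnit (J₁ - J₀))
    (s : H →L[ℂ] H) (hs : s = CFC.sqrt (2 + J₁ * J₀ + J₀ * J₁))
    (F : H →L[ℂ] H)
    (hF : F = (1 / 2 : ℂ) • (J₀ * (J₁ * J₀ - 1) * Ring.inverse (J₁ * J₀ + 1) * s))
    (a : H →L[ℂ] H)
    (ha₀ : IsCompactOperator ⇑(a * J₀ - J₀ * a))
    (ha₁ : IsCompactOperator ⇑(a * J₁ - J₁ * a)) :
    IsCompactOperator ⇑(a * F - F * a) := by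
  set P : (H →L[ℂ] H) → Prop := fun x => IsCompactOperator ⇑(a * x - x * a) with hP
  have hPJ₀ : P J₀ := ha₀
  have hPJ₁ : P J₁ := ha₁
  have hP1 : P 1 := by
    show IsCompactOperator ⇑(a * 1 - 1 * a)
    rw [mul_one, one_mul, sub_self]
    exact isCompactOperator_zero
  have hPadd : ∀ {x y}, P x → P y → P (x + y) := by
    intro x y hx hy
    have h : a * (x + y) - (x + y) * a = (a * x - x * a) + (a * y - y * a) := by noncomm_ring
    show IsCompactOperator ⇑(a * (x + y) - (x + y) * a)
    rw [h]
    exact hx.add hy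
  have hPneg : ∀ {x}, P x → P (-x) := by
    intro x hx
    have h : a * (-x) - (-x) * a = -(a * x - x * a) := by noncomm_ring
    show IsCompactOperator ⇑(a * (-x) - (-x) * a)
    rw [h]
    exact hx.neg
  have hPsub : ∀ {x y}, P x → P y → P (x - y) := by
    intro x y hx hy
    have h : x - y = x + (-y) := by noncomm_ring
    rw [h]; exact hPadd hx (hPneg hy)
  have hPmul : ∀ {x y}, P x → P y → P (x * y) := by
    intro x y hx hy
    have h : a * (x * y) - (x * y) * a = (a * x - x * a) * y + x * (a * y - y * a) := by
      noncomm_ring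
    show IsCompactOperator ⇑(a * (x * y) - (x * y) * a)
    rw [h]
    exact (hx.comp_clm y).add (hy.clm_comp x)
  have hPsmulR : ∀ (r : ℝ) {x}, P x → P (r • x) := by
    intro r x hx
    have h : a * (r • x) - (r • x) * a = r • (a * x - x * a) := by
      rw [mul_smul_comm, smul_mul_assoc, smul_sub]
    show IsCompactOperator ⇑(a * (r • x) - (r • x) * a)
    rw [h]
    exact hx.smul r
  have hPsmulC : ∀ (c : ℂ) {x}, P x → P (c • x) := by
    intro c x hx
    have h : a * (c • x) - (c • x) * a = c • (a * x - x * a) := by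
      rw [mul_smul_comm, smul_mul_assoc, smul_sub]
    show IsCompactOperator ⇑(a * (c • x) - (c • x) * a)
    rw [h]
    exact hx.smul c
  have hPclosure : ∀ (X : Set (H →L[ℂ] H)), (∀ y ∈ X, P y) → ∀ x ∈ closure X, P x := by
    intro X hX x hx
    have hcont : Continuous (fun y : H →L[ℂ] H => a * y - y * a) :=
      ((continuous_const.mul continuous_id).sub (continuous_id.mul continuous_const))
    have hclosed : IsClosed {f : H →L[ℂ] H | IsCompactOperator ⇑f} :=
      isClosed_setOf_isCompactOperator
    have : IsClosed {y : H →L[ℂ] H | P y} := hclosed.preimage hcont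
    exact this.closure_subset_iff.mpr hX hx
  -- inverse
  have hPinv : ∀ {u}, IsUnit u → P u → P (Ring.inverse u) := by
    intro u hu hx
    set w := Ring.inverse u with hw
    have h1 : u * w = 1 := Ring.mul_inverse_cancel u hu
    have h2 : w * u = 1 := Ring.inverse_mul_cancel u hu
    have e : w * (a * u - u * a) * w = w * a - a * w := by
      calc w * (a * u - u * a) * w
          = w * a * (u * w) - w * u * (a * w) := by noncomm_ring
        _ = w * a - a * w := by rw [h1, h2, mul_one, one_mul]
    have h : a * w - w * a = -(w * (a * u - u * a) * w) := by rw [e, neg_sub]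
    show IsCompactOperator ⇑(a * w - w * a)
    rw [h]
    exact ((hx.comp_clm w).clm_comp w).neg
  -- powers and polynomials of T
  set T : H →L[ℂ] H := 2 + J₁ * J₀ + J₀ * J₁ with hT
  have hP2 : P (2 : H →L[ℂ] H) := by
    have : (2 : H →L[ℂ] H) = 1 + 1 := by norm_num
    rw [this]; exact hPadd hP1 hP1
  have hPT : P T := hPadd (hPadd hP2 (hPmul hPJ₁ hPJ₀)) (hPmul hPJ₀ hPJ₁)
  have hPpow : ∀ n : ℕ, P (T ^ n) := by
    intro n
    induction n with
    | zero => simpa using hP1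
    | succ n ih => rw [pow_succ]; exact hPmul ih hPT
  have hPalg : ∀ r : ℝ, P (algebraMap ℝ (H →L[ℂ] H) r) := by
    intro r
    rw [Algebra.algebraMap_eq_smul_one]
    exact hPsmulR r hP1
  have hPaeval : ∀ p : Polynomial ℝ, P (Polynomial.aeval T p) := by
    intro p
    induction p using Polynomial.induction_on' with
    | add p q hp hq => rw [map_add]; exact hPadd hp hq
    | monomial n r =>
      rw [Polynomial.aeval_monomial]
      exact hPmul (hPalg r) (hPpow n)
  -- selfadjointness and positivity of T
  have h0 : J₀ * J₀ = -1 := by rw [← pow_two]; exact hJ₀sq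
  have h1 : J₁ * J₁ = -1 := by rw [← pow_two]; exact hJ₁sq
  have hTsa : IsSelfAdjoint T := by
    show star T = T
    rw [hT, show (2 : H →L[ℂ] H) = 1 + 1 by norm_num]
    simp only [star_add, star_mul, star_one, hJ₀sa, hJ₁sa]
    noncomm_ring
  have hTform : star (J₀ - J₁) * (J₀ - J₁) = T := by
    rw [star_sub, hJ₀sa, hJ₁sa, hT, show (2 : H →L[ℂ] H) = 1 + 1 by norm_num]
    have : (-J₀ - -J₁) * (J₀ - J₁)
        = -(J₀ * J₀) + J₀ * J₁ + J₁ * J₀ - J₁ * J₁ := by noncomm_ring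
    rw [this, h0, h1]
    noncomm_ring
  have hTnn : (0 : H →L[ℂ] H) ≤ T := hTform ▸ star_mul_self_nonneg (J₀ - J₁)
  -- P s
  have hPs : P s := by
    rw [hs, CFC.sqrt_eq_cfc, cfc_nnreal_eq_real NNReal.sqrt (ha := hTnn)]
    exact hPclosure _ (by rintro y ⟨p, rfl⟩; exact hPaeval p)
      _ (cfc_mem_closure_polyRange T hTsa _)
  -- unit
  have hJ₀unit : IsUnit J₀ := by
    refine ⟨⟨J₀, -J₀, ?_, ?_⟩, rfl⟩
    · rw [mul_neg, h0, neg_neg]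
    · rw [neg_mul, h0, neg_neg]
  have hUform : (J₁ - J₀) * J₀ = J₁ * J₀ + 1 := by
    rw [sub_mul, h0, sub_neg_eq_add]
  have hUnit : IsUnit (J₁ * J₀ + 1) := hUform ▸ hinv.mul hJ₀unit
  -- conclude
  show P F
  rw [hF]
  exact hPsmulC _ (hPmul (hPmul (hPmul hPJ₀ (hPsub (hPmul hPJ₁ hPJ₀) hP1))
    (hPinv hUnit (hPadd (hPmul hPJ₁ hPJ₀) hP1))) hPs)
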